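/- Let μ ∈ ℝ, σ > 0, λ a positive integer, and r ≥ 1 an integer. Let X_τ (τ ∈ {1,…,r}) be mutually independent real random variables with X_τ ~ N(μ, σ²/(τλ)), and set μ̂ = Σ_{τ=1}^r (2τ/(r(r+1)))·X_τ. Then for every ε > 0, P(|μ̂ − μ| ≥ ε) ≤ 2·exp(−ε²·λ·r·(r+1)/(4σ²)). -/

import Mathlib

open MeasureTheory ProbabilityTheory Real
open scoped NNReal
open scoped ENNReal

lemma exp_mul_gaussianPDFReal (m : ℝ) (v : ℝ≥0) (hv : v ≠ 0) (t x : ℝ) :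
    Real.exp (t * x) * gaussianPDFReal m v x
      = Real.exp (t * m + t ^ 2 * v / 2) * gaussianPDFReal (m + t * v) v x := by
  have hv' : (v : ℝ) ≠ 0 := by exact_mod_cast hv
  have h1 : ∀ a b C : ℝ, Real.exp a * (C * Real.exp b) = C * Real.exp (a + b) := by
    intros a b C; rw [Real.exp_add]; ring
  simp only [gaussianPDFReal]
  rw [h1, h1]
  congr 1
  rw [Real.exp_eq_exp]
  field_simp
  ring

lemma integral_exp_mul_gaussianReal (m : ℝ) (v : ℝ≥0) (hv : v ≠ 0) (t : ℝ) :
    ∫ x, Real.exp (t * x) ∂(gaussianReal m v) = Real.exp (t * m + t ^ 2 * v / 2) := by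
  rw [gaussianReal_of_var_ne_zero _ hv]
  have hpdf : gaussianPDF m v = fun x => (Real.toNNReal (gaussianPDFReal m v x) : ℝ≥0∞) :=
    rfl
  rw [hpdf, integral_withDensity_eq_integral_smul
    ((measurable_gaussianPDFReal m v).real_toNNReal) _]
  have : ∀ x, (Real.toNNReal (gaussianPDFReal m v x)) • Real.exp (t * x)
      = Real.exp (t * m + t ^ 2 * v / 2) * gaussianPDFReal (m + t * v) v x := by
    intro x
    rw [NNReal.smul_def, smul_eq_mul, Real.coe_toNNReal _ (gaussianPDFReal_nonneg m v x),
      mul_comm, exp_mul_gaussianPDFReal m v hv t x]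
  simp_rw [this]
  rw [integral_const_mul, integral_gaussianPDFReal_eq_one _ hv, mul_one]

lemma integrable_exp_mul_gaussianReal (m : ℝ) (v : ℝ≥0) (hv : v ≠ 0) (t : ℝ) :
    Integrable (fun x => Real.exp (t * x)) (gaussianReal m v) := by
  rw [gaussianReal_of_var_ne_zero _ hv]
  have hpdf : gaussianPDF m v = fun x => (Real.toNNReal (gaussianPDFReal m v x) : ℝ≥0∞) :=
    rfl
  rw [hpdf, integrable_withDensity_iff_integrable_smul
    ((measurable_gaussianPDFReal m v).real_toNNReal)]
  have : ∀ x, (Real.toNNReal (gaussianPDFReal m v x)) • Real.exp (t * x)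
      = Real.exp (t * m + t ^ 2 * v / 2) * gaussianPDFReal (m + t * v) v x := by
    intro x
    rw [NNReal.smul_def, smul_eq_mul, Real.coe_toNNReal _ (gaussianPDFReal_nonneg m v x),
      mul_comm, exp_mul_gaussianPDFReal m v hv t x]
  simp_rw [this]
  exact (integrable_gaussianPDFReal _ _).const_mul _

lemma sum_range_add_one (n : ℕ) :
    ∑ i ∈ Finset.range n, ((i : ℝ) + 1) = (n : ℝ) * ((n : ℝ) + 1) / 2 := by
  induction n with
  | zero => simp
  | succ n ih => rw [Finset.sum_range_succ, ih]; push_cast; ring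

/-- If `X 1, …, X r` are mutually independent with `X τ ~ N(μ, σ²/(τλ))` and
`μ̂ = Σ_{τ=1}^r (2τ/(r(r+1))) X τ`, then for every `ε > 0`,
`P(|μ̂ − μ| ≥ ε) ≤ 2 exp(−ε² λ r (r+1) / (4σ²))`.
(The variables are indexed by `i : Fin r`, with `X i` playing the role of `X_{τ}` for
`τ = i + 1`.) -/
theorem weighted_mean_tail_bound
    {Ω : Type*} [MeasurableSpace Ω] (P : Measure Ω) [IsProbabilityMeasure P]
    (μ σ : ℝ) (hσ : 0 < σ) (lam r : ℕ) (hlam : 0 < lam) (hr : 1 ≤ r)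
    (X : Fin r → Ω → ℝ)
    (hXmeas : ∀ i, Measurable (X i))
    (hXdist : ∀ i : Fin r, P.map (X i) =
      gaussianReal μ (Real.toNNReal (σ ^ 2 / (((i : ℕ) + 1 : ℝ) * (lam : ℝ)))))
    (hXindep : iIndepFun X P)
    (muhat : Ω → ℝ)
    (hmuhat : ∀ ω, muhat ω = ∑ i : Fin r,
        (2 * ((i : ℕ) + 1 : ℝ) / ((r : ℝ) * ((r : ℝ) + 1))) * X i ω)
    (ε : ℝ) (hε : 0 < ε) :
    P {ω | ε ≤ |muhat ω - μ|} ≤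
      ENNReal.ofReal (2 * Real.exp (-(ε ^ 2 * (lam : ℝ) * (r : ℝ) * ((r : ℝ) + 1)) / (4 * σ ^ 2))) := by
  have hrpos : (0 : ℝ) < (r : ℝ) := by exact_mod_cast hr
  have hr1 : (0 : ℝ) < (r : ℝ) + 1 := by linarith
  have hlamR : (0 : ℝ) < (lam : ℝ) := by exact_mod_cast hlam
  set V : ℝ := 2 * σ ^ 2 / ((lam : ℝ) * (r : ℝ) * ((r : ℝ) + 1)) with hVdef
  have hV : 0 < V := by positivity
  set c : Fin r → ℝ := fun i => 2 * ((i : ℕ) + 1 : ℝ) / ((r : ℝ) * ((r : ℝ) + 1)) with hcdef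
  set Y : Fin r → Ω → ℝ := fun i ω => c i * X i ω with hYdef
  set vR : Fin r → ℝ := fun i => σ ^ 2 / (((i : ℕ) + 1 : ℝ) * (lam : ℝ)) with hvRdef
  have hvRpos : ∀ i, 0 < vR i := by
    intro i
    have : (0 : ℝ) < ((i : ℕ) + 1 : ℝ) := by positivity
    exact div_pos (by positivity) (by positivity)
  have hvne : ∀ i : Fin r, Real.toNNReal (vR i) ≠ 0 := fun i =>
    (Real.toNNReal_pos.mpr (hvRpos i)).ne'
  have hvcoe : ∀ i : Fin r, ((Real.toNNReal (vR i) : ℝ≥0) : ℝ) = vR i := fun i =>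
    Real.coe_toNNReal _ (hvRpos i).le
  have hYmeas : ∀ i, Measurable (Y i) := fun i => (hXmeas i).const_mul _
  have hYindep : iIndepFun Y P :=
    hXindep.comp (fun i x => c i * x) (fun i => measurable_const_mul _)
  -- integrability of exp (t * X i)
  have hintX : ∀ (i : Fin r) (t : ℝ), Integrable (fun ω => Real.exp (t * X i ω)) P := by
    intro i t
    have h := integrable_exp_mul_gaussianReal μ _ (hvne i) t
    rw [← hXdist i] at h
    exact (integrable_map_measure
      (measurable_exp.comp (measurable_id.const_mul t)).aestronglyMeasurable
      (hXmeas i).aemeasurable).mp h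
  have hmgfX : ∀ (i : Fin r) (t : ℝ),
      mgf (X i) P t = Real.exp (t * μ + t ^ 2 * vR i / 2) := by
    intro i t
    have h1 : mgf (X i) P t = ∫ x, Real.exp (t * x) ∂(P.map (X i)) := by
      rw [mgf]
      exact (integral_map (f := fun x => Real.exp (t * x)) (hXmeas i).aemeasurable
        (Measurable.aestronglyMeasurable (by fun_prop))).symm
    rw [h1, hXdist i, integral_exp_mul_gaussianReal _ _ (hvne i) t, hvcoe i]
  have hmgfY : ∀ (i : Fin r) (t : ℝ),
      mgf (Y i) P t = Real.exp (t * c i * μ + (t * c i) ^ 2 * vR i / 2) := by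
    intro i t
    have : mgf (Y i) P t = mgf (X i) P (t * c i) := by
      simp only [mgf, hYdef]
      congr 1 with ω
      ring_nf
    rw [this, hmgfX]
  have hsum : muhat = ∑ i : Fin r, Y i := by
    funext ω
    rw [hmuhat]
    simp [hYdef, hcdef]
  -- mgf of muhat
  have hgauss : ∑ i : Fin r, (((i : ℕ) : ℝ) + 1) = (r : ℝ) * ((r : ℝ) + 1) / 2 := by
    rw [Fin.sum_univ_eq_sum_range (fun i => ((i : ℝ) + 1)) r]
    exact sum_range_add_one r
  have hc1 : ∑ i : Fin r, c i = 1 := by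
    have h : ∀ i : Fin r, c i = (((i : ℕ) : ℝ) + 1) * (2 / ((r : ℝ) * ((r : ℝ) + 1))) := by
      intro i; rw [hcdef]; ring
    rw [Finset.sum_congr rfl (fun i _ => h i), ← Finset.sum_mul, hgauss]
    field_simp
  have hc2 : ∑ i : Fin r, (c i) ^ 2 * vR i = V := by
    have h : ∀ i : Fin r, (c i) ^ 2 * vR i
        = (((i : ℕ) : ℝ) + 1) * (4 * σ ^ 2 / ((lam : ℝ) * (r : ℝ) ^ 2 * ((r : ℝ) + 1) ^ 2)) := by
      intro i
      have hi : (0 : ℝ) < ((i : ℕ) : ℝ) + 1 := by positivity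
      rw [hcdef, hvRdef]
      field_simp
      ring
    rw [Finset.sum_congr rfl (fun i _ => h i), ← Finset.sum_mul, hgauss, hVdef]
    field_simp
    ring
  have hmgfmu : ∀ t : ℝ, mgf muhat P t = Real.exp (t * μ + t ^ 2 * V / 2) := by
    intro t
    rw [hsum, hYindep.mgf_sum hYmeas Finset.univ,
      Finset.prod_congr rfl (fun i _ => hmgfY i t), ← Real.exp_sum]
    congr 1
    rw [Finset.sum_add_distrib]
    have e1 : ∑ i : Fin r, t * c i * μ = t * μ := by
      rw [Finset.sum_congr rfl (fun i _ => show t * c i * μ = (t * μ) * c i from by ring),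
        ← Finset.mul_sum, hc1, mul_one]
    have e2 : ∑ i : Fin r, (t * c i) ^ 2 * vR i / 2 = t ^ 2 * V / 2 := by
      rw [Finset.sum_congr rfl
          (fun i _ => show (t * c i) ^ 2 * vR i / 2 = (t ^ 2 / 2) * ((c i) ^ 2 * vR i) from by
            ring),
        ← Finset.mul_sum, hc2]
      ring
    rw [e1, e2]
  -- integrability of exp (t * muhat)
  have hintmu : ∀ t : ℝ, Integrable (fun ω => Real.exp (t * muhat ω)) P := by
    intro t
    have hterm : ∀ i ∈ Finset.univ, Integrable (fun ω => Real.exp (t * Y i ω)) P := by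
      intro i _
      have := hintX i (t * c i)
      refine this.congr (ae_of_all _ fun ω => ?_)
      simp only [hYdef]
      ring_nf
    have h := hYindep.integrable_exp_mul_sum hYmeas hterm
    refine h.congr (ae_of_all _ fun ω => ?_)
    rw [hsum]
  -- Chernoff bounds on S = muhat - μ
  set S : Ω → ℝ := fun ω => muhat ω - μ with hSdef
  have hmgfS : ∀ t : ℝ, mgf S P t = Real.exp (t ^ 2 * V / 2) := by
    intro t
    have h : mgf S P t = mgf muhat P t / Real.exp (t * μ) := by
      simp only [mgf, hSdef]
      simp_rw [mul_sub, Real.exp_sub]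
      rw [integral_div]
    rw [h, hmgfmu t, ← Real.exp_sub]
    congr 1
    ring
  have hintS : ∀ t : ℝ, Integrable (fun ω => Real.exp (t * S ω)) P := by
    intro t
    simp only [hSdef]
    simp_rw [mul_sub, Real.exp_sub]
    exact (hintmu t).div_const _
  set E : ℝ := Real.exp (-(ε ^ 2 * (lam : ℝ) * (r : ℝ) * ((r : ℝ) + 1)) / (4 * σ ^ 2)) with hEdef
  have hexp_eq : -(ε / V) * ε + (ε / V) ^ 2 * V / 2
      = -(ε ^ 2 * (lam : ℝ) * (r : ℝ) * ((r : ℝ) + 1)) / (4 * σ ^ 2) := by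
    rw [hVdef]
    have hσ2 : σ ^ 2 ≠ 0 := by positivity
    field_simp
    ring
  have hub : (P {ω | ε ≤ S ω}).toReal ≤ E := by
    have h := measure_ge_le_exp_mul_mgf (X := S) (μ := P) (t := ε / V) ε
      (le_of_lt (div_pos hε hV)) (hintS _)
    rw [hmgfS, ← Real.exp_add, hexp_eq] at h
    exact h
  have hlb : (P {ω | S ω ≤ -ε}).toReal ≤ E := by
    have h := measure_le_le_exp_mul_mgf (X := S) (μ := P) (t := -(ε / V)) (-ε)
      (neg_nonpos.mpr (le_of_lt (div_pos hε hV))) (hintS _)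
    rw [hmgfS, ← Real.exp_add] at h
    have : - -(ε / V) * -ε + (-(ε / V)) ^ 2 * V / 2
        = -(ε ^ 2 * (lam : ℝ) * (r : ℝ) * ((r : ℝ) + 1)) / (4 * σ ^ 2) := by
      rw [← hexp_eq]; ring
    rw [this] at h
    exact h
  -- combine
  have hsub : {ω | ε ≤ |muhat ω - μ|} ⊆ {ω | ε ≤ S ω} ∪ {ω | S ω ≤ -ε} := by
    intro ω hω
    have hω' : ε ≤ |muhat ω - μ| := hω
    rcases le_abs.mp hω' with h | h
    · exact Or.inl h
    · refine Or.inr ?_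
      show muhat ω - μ ≤ -ε
      linarith
  calc P {ω | ε ≤ |muhat ω - μ|} ≤ P ({ω | ε ≤ S ω} ∪ {ω | S ω ≤ -ε}) := measure_mono hsub
    _ ≤ P {ω | ε ≤ S ω} + P {ω | S ω ≤ -ε} := measure_union_le _ _
    _ ≤ ENNReal.ofReal E + ENNReal.ofReal E := by
        gcongr
        · rw [← ENNReal.ofReal_toReal (measure_ne_top P _)]
          exact ENNReal.ofReal_le_ofReal hub
        · rw [← ENNReal.ofReal_toReal (measure_ne_top P _)]
          exact ENNReal.ofReal_le_ofReal hlb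
    _ = ENNReal.ofReal (2 * E) := by
        rw [← ENNReal.ofReal_add (Real.exp_pos _).le (Real.exp_pos _).le, two_mul]
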